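/- Let P be a finite poset with Ch(P) = P, i.e., every principal filter of P is a chain. Suppose P is Γ-colored d-complete via κ : P → Γ with Γ simply laced, and also Γ'-colored d-complete via κ' : P → Γ' with Γ' simply laced. Then there is a bijection γ : Γ → Γ' preserving adjacency in both directions (a graph isomorphism of Dynkin diagrams) such that κ' = γ ∘ κ. In particular, the Γ-colored d-complete structure on such a P with simply laced diagram is unique up to isomorphism. -/

import Mathlib

/-!
Common definitions: Dynkin diagram data, Γ-colored posets, and the coloring
properties EC, NA, AC, ICE2, UCB1, LCB1 from the paper, together with
Γ-colored d-complete and Γ-colored minuscule posets, top trees, slant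
irreducibility, extensions, lower frontier censuses, and full heaps.
-/

universe u v w

variable {Γ : Type u} {P : Type v}

/-- The integers `θ a b` form a Dynkin diagram datum. -/
def DynkinDatum (θ : Γ → Γ → ℤ) : Prop :=
  (∀ a : Γ, θ a a = 2) ∧ (∀ a b : Γ, a ≠ b → θ a b ≤ 0) ∧
    (∀ a b : Γ, a ≠ b → (θ a b = 0 ↔ θ b a = 0))

/-- Colors `a` and `b` are adjacent. -/
def AdjColor (θ : Γ → Γ → ℤ) (a b : Γ) : Prop := θ a b < 0

/-- The Dynkin diagram is simply laced. -/
def SimplyLaced (θ : Γ → Γ → ℤ) : Prop :=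
  ∀ a b : Γ, a ≠ b → θ a b = 0 ∨ θ a b = -1

/-- All closed intervals are finite. -/
def LocallyFinitePoset (α : Type*) [PartialOrder α] : Prop :=
  ∀ x y : α, (Set.Icc x y).Finite

/-- A poset is connected if it cannot be written as a disjoint union of two nonempty
subposets with no comparabilities between them. -/
def ConnectedPoset (α : Type*) [PartialOrder α] : Prop :=
  ∀ S : Set α, S.Nonempty → Sᶜ.Nonempty → ∃ x ∈ S, ∃ y ∈ Sᶜ, x ≤ y ∨ y ≤ x

section
variable [PartialOrder P]

/-- (EC) Elements with equal colors are comparable. -/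
def ColoredEC (κ : P → Γ) : Prop := ∀ x y : P, κ x = κ y → x ≤ y ∨ y ≤ x

/-- (NA) Neighbors have adjacent colors. -/
def ColoredNA (θ : Γ → Γ → ℤ) (κ : P → Γ) : Prop :=
  ∀ x y : P, x ⋖ y → AdjColor θ (κ x) (κ y)

/-- (AC) Elements with adjacent colors are comparable. -/
def ColoredAC (θ : Γ → Γ → ℤ) (κ : P → Γ) : Prop :=
  ∀ x y : P, AdjColor θ (κ x) (κ y) → x ≤ y ∨ y ≤ x

/-- (ICE2) Between consecutive elements of a color `a`, the census of colors
adjacent to `a` is two. -/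
def ColoredICE2 (θ : Γ → Γ → ℤ) (κ : P → Γ) : Prop :=
  ∀ (a : Γ) (x y : P), κ x = a → κ y = a → x < y → (∀ z ∈ Set.Ioo x y, κ z ≠ a) →
    (∑ᶠ z ∈ Set.Ioo x y, -θ (κ z) a) = 2

/-- `U(x,P)`: elements above `x` with color adjacent to that of `x`. -/
def USet (θ : Γ → Γ → ℤ) (κ : P → Γ) (x : P) : Set P :=
  {y : P | x < y ∧ AdjColor θ (κ y) (κ x)}

/-- `L(x,P)`: elements below `x` with color adjacent to that of `x`. -/
def LSet (θ : Γ → Γ → ℤ) (κ : P → Γ) (x : P) : Set P :=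
  {y : P | y < x ∧ AdjColor θ (κ y) (κ x)}

/-- (UCB1) Upper frontier census bound. -/
def ColoredUCB1 (θ : Γ → Γ → ℤ) (κ : P → Γ) : Prop :=
  ∀ x : P, (∀ y : P, κ y = κ x → ¬x < y) →
    (USet θ κ x).Finite ∧ (∑ᶠ y ∈ USet θ κ x, -θ (κ y) (κ x)) ≤ 1

/-- (LCB1) Lower frontier census bound. -/
def ColoredLCB1 (θ : Γ → Γ → ℤ) (κ : P → Γ) : Prop :=
  ∀ x : P, (∀ y : P, κ y = κ x → ¬y < x) →
    (LSet θ κ x).Finite ∧ (∑ᶠ y ∈ LSet θ κ x, -θ (κ y) (κ x)) ≤ 1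

/-- A Γ-colored d-complete poset: locally finite, surjectively colored, and
satisfying EC, NA, AC, ICE2, and UCB1. -/
def GColoredDComplete (θ : Γ → Γ → ℤ) (κ : P → Γ) : Prop :=
  LocallyFinitePoset P ∧ Function.Surjective κ ∧ ColoredEC κ ∧ ColoredNA θ κ ∧
    ColoredAC θ κ ∧ ColoredICE2 θ κ ∧ ColoredUCB1 θ κ

/-- A Γ-colored minuscule poset: Γ-colored d-complete and LCB1. -/
def GColoredMinuscule (θ : Γ → Γ → ℤ) (κ : P → Γ) : Prop :=
  GColoredDComplete θ κ ∧ ColoredLCB1 θ κ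

/-- The top tree: the set of elements maximal in their color class. -/
def TopTree (κ : P → Γ) : Set P := {x : P | ∀ y : P, κ y = κ x → ¬x < y}

/-- `x` is covered by `y` within the subposet `S`. -/
def CoversIn (S : Set P) (x y : P) : Prop :=
  x ∈ S ∧ y ∈ S ∧ x < y ∧ ∀ z ∈ S, x < z → ¬z < y

/-- Slant irreducibility of a Γ-colored d-complete poset. -/
def SlantIrreducible (κ : P → Γ) : Prop :=
  ConnectedPoset P ∧ ∀ x y : P, CoversIn (TopTree κ) x y → ∃ z : P, z ≠ y ∧ κ z = κ y

/-- A saturated chain in a subposet `S`: a chain that is convex in `S`. -/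
def SaturatedChainIn (S C : Set P) : Prop :=
  C ⊆ S ∧ IsChain (· ≤ ·) C ∧ ∀ x ∈ C, ∀ y ∈ C, ∀ z ∈ S, x < z → z < y → z ∈ C

/-- The lower frontier census at the element `y`. -/
noncomputable def LCensus (θ : Γ → Γ → ℤ) (κ : P → Γ) (y : P) : ℤ :=
  ∑ᶠ x ∈ LSet θ κ y, -θ (κ x) (κ y)

/-- A full heap: locally finite, surjectively colored, EC, NA, AC, ICE2, and every
color class order-isomorphic to ℤ. -/
def FullHeap (θ : Γ → Γ → ℤ) (κ : P → Γ) : Prop :=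
  LocallyFinitePoset P ∧ Function.Surjective κ ∧ ColoredEC κ ∧ ColoredNA θ κ ∧
    ColoredAC θ κ ∧ ColoredICE2 θ κ ∧ ∀ a : Γ, Nonempty ({x : P // κ x = a} ≃o ℤ)

end

/-- `ι` realizes the colored poset `A` as an order filter of the colored poset `B`. -/
def FilterEmbedding {G : Type*} {A B : Type*} [PartialOrder A] [PartialOrder B]
    (κ : A → G) (κ' : B → G) (ι : A → B) : Prop :=
  (∀ p q : A, ι p ≤ ι q ↔ p ≤ q) ∧ (∀ p : A, κ' (ι p) = κ p) ∧ IsUpperSet (Set.range ι)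

/-- `B` is an extension of `A` by the color `a`, with extending element `x`. -/
def IsExtensionBy {G : Type*} {A B : Type*} [PartialOrder A] [PartialOrder B]
    (θ : G → G → ℤ) (κ : A → G) (κ' : B → G) (a : G) (ι : A → B) (x : B) : Prop :=
  Finite B ∧ GColoredDComplete θ κ' ∧ ConnectedPoset B ∧
    FilterEmbedding κ κ' ι ∧ (Set.range ι)ᶜ = {x} ∧ κ' x = a


section MyAux
variable {Γ : Type u} {P : Type v} [PartialOrder P] [Fintype P]

lemma myAdj_symm {θ : Γ → Γ → ℤ} (hθ : DynkinDatum θ) {a b : Γ}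
    (h : AdjColor θ a b) : AdjColor θ b a := by
  obtain ⟨h2, hle, hz⟩ := hθ
  unfold AdjColor at *
  by_cases hab : a = b
  · subst hab; exact h
  · rcases lt_or_eq_of_le (hle b a (Ne.symm hab)) with h' | h'
    · exact h'
    · have := (hz a b hab).2 h'
      omega

lemma myAdj_ne {θ : Γ → Γ → ℤ} (hθ : DynkinDatum θ) {a b : Γ}
    (h : AdjColor θ a b) : a ≠ b := by
  rintro rfl
  unfold AdjColor at h
  rw [hθ.1 a] at h
  omega

lemma myChain_min {S : Set P} (hc : IsChain (· ≤ ·) S) (hne : S.Nonempty) :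
    ∃ m ∈ S, ∀ z ∈ S, m ≤ z := by
  classical
  have hfin : S.Finite := Set.toFinite _
  obtain ⟨a, ha⟩ := hne
  obtain ⟨m, hmS, hmin⟩ : ∃ m ∈ hfin.toFinset, ∀ x ∈ hfin.toFinset, ¬ x < m := by
    obtain ⟨m, hm⟩ := Finset.exists_minimal ⟨a, hfin.mem_toFinset.mpr ha⟩
    exact ⟨m, hm.1, fun x hx hlt => hlt.not_ge (hm.2 hx hlt.le)⟩
  refine ⟨m, hfin.mem_toFinset.mp hmS, fun z hz => ?_⟩
  rcases eq_or_ne z m with rfl | hzm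
  · exact le_rfl
  · rcases hc (hfin.mem_toFinset.mp hmS) hz (Ne.symm hzm) with h | h
    · exact h
    · exact absurd (lt_of_le_of_ne h hzm) (hmin z (hfin.mem_toFinset.mpr hz))

lemma myChain_max {S : Set P} (hc : IsChain (· ≤ ·) S) (hne : S.Nonempty) :
    ∃ m ∈ S, ∀ z ∈ S, z ≤ m := by
  classical
  have hfin : S.Finite := Set.toFinite _
  obtain ⟨a, ha⟩ := hne
  obtain ⟨m, hmS, hmax⟩ : ∃ m ∈ hfin.toFinset, ∀ x ∈ hfin.toFinset, ¬ m < x := by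
    obtain ⟨m, hm⟩ := Finset.exists_maximal ⟨a, hfin.mem_toFinset.mpr ha⟩
    exact ⟨m, hm.1, fun x hx hlt => hlt.not_ge (hm.2 hx hlt.le)⟩
  refine ⟨m, hfin.mem_toFinset.mp hmS, fun z hz => ?_⟩
  rcases eq_or_ne z m with rfl | hzm
  · exact le_rfl
  · rcases hc (hfin.mem_toFinset.mp hmS) hz (Ne.symm hzm) with h | h
    · exact absurd (lt_of_le_of_ne h (Ne.symm hzm)) (hmax z (hfin.mem_toFinset.mpr hz))
    · exact h

lemma myCov_min (hch : ∀ p : P, IsChain (· ≤ ·) (Set.Ici p)) {x t : P}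
    (hne : (Set.Ioo x t).Nonempty) :
    ∃ m ∈ Set.Ioo x t, x ⋖ m ∧ ∀ z ∈ Set.Ioo x t, m ≤ z := by
  have hc : IsChain (· ≤ ·) (Set.Ioo x t) :=
    (hch x).mono (fun z hz => le_of_lt hz.1)
  obtain ⟨m, hmS, hmin⟩ := myChain_min hc hne
  refine ⟨m, hmS, ⟨hmS.1, fun z hz1 hz2 => ?_⟩, hmin⟩
  exact absurd (hmin z ⟨hz1, hz2.trans hmS.2⟩) hz2.not_ge

lemma myCov_max (hch : ∀ p : P, IsChain (· ≤ ·) (Set.Ici p)) {x t : P}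
    (hne : (Set.Ioo x t).Nonempty) :
    ∃ m ∈ Set.Ioo x t, m ⋖ t ∧ ∀ z ∈ Set.Ioo x t, z ≤ m := by
  have hc : IsChain (· ≤ ·) (Set.Ioo x t) :=
    (hch x).mono (fun z hz => le_of_lt hz.1)
  obtain ⟨m, hmS, hmax⟩ := myChain_max hc hne
  refine ⟨m, hmS, ⟨hmS.2, fun z hz1 hz2 => ?_⟩, hmax⟩
  exact absurd (hmax z ⟨hmS.1.trans hz1, hz2⟩) hz1.not_ge

lemma myUCB_two {θ : Γ → Γ → ℤ} {κ : P → Γ} (hU : ColoredUCB1 θ κ)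
    {x m y : P} (hmax : ∀ z : P, κ z = κ x → ¬ x < z)
    (hm : m ∈ USet θ κ x) (hy : y ∈ USet θ κ x) (hne : m ≠ y) : False := by
  classical
  obtain ⟨hfin, hsum⟩ := hU x hmax
  rw [← Set.Finite.coe_toFinset hfin, finsum_mem_coe_finset] at hsum
  have hterm : ∀ z ∈ hfin.toFinset, (1:ℤ) ≤ -θ (κ z) (κ x) := by
    intro z hz
    have h := (hfin.mem_toFinset.mp hz).2
    unfold AdjColor at h
    omega
  have hsub : ({m, y} : Finset P) ⊆ hfin.toFinset := by
    intro z hz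
    simp only [Finset.mem_insert, Finset.mem_singleton] at hz
    rcases hz with rfl | rfl
    · exact hfin.mem_toFinset.mpr hm
    · exact hfin.mem_toFinset.mpr hy
  have h2 : (2:ℤ) ≤ ∑ z ∈ ({m, y} : Finset P), -θ (κ z) (κ x) := by
    rw [Finset.sum_pair hne]
    have h1 := hterm m (hsub (by simp))
    have h2' := hterm y (hsub (by simp))
    linarith
  have h3 : ∑ z ∈ ({m, y} : Finset P), -θ (κ z) (κ x)
      ≤ ∑ z ∈ hfin.toFinset, -θ (κ z) (κ x) := by
    refine Finset.sum_le_sum_of_subset_of_nonneg hsub ?_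
    intro z hz _
    linarith [hterm z hz]
  linarith

lemma myNoPair {θ : Γ → Γ → ℤ} {κ : P → Γ}
    (hθ : DynkinDatum θ) (hsl : SimplyLaced θ) (hdc : GColoredDComplete θ κ)
    (hch : ∀ p : P, IsChain (· ≤ ·) (Set.Ici p)) :
    ∀ n : ℕ, ∀ u v : P, (Set.Icc u v).ncard ≤ n → u < v → κ u = κ v →
      (∀ z ∈ Set.Ioo u v, κ z ≠ κ v) →
      (∀ w : P, v < w → ∀ z ∈ Set.Icc u v, κ w ≠ κ z) → False := by
  classical
  intro n
  induction n using Nat.strong_induction_on with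
  | _ n ih =>
  intro u v hcard huv hcol hcons hstar
  obtain ⟨hlf, hsurj, hEC, hNA, hAC, hICE2, hUCB1⟩ := hdc
  have hSfin : (Set.Ioo u v).Finite := Set.toFinite _
  have hsum : (∑ᶠ z ∈ Set.Ioo u v, -θ (κ z) (κ v)) = 2 :=
    hICE2 (κ v) u v hcol rfl huv hcons
  rw [← Set.Finite.coe_toFinset hSfin, finsum_mem_coe_finset] at hsum
  have hmemF : ∀ {z : P}, z ∈ hSfin.toFinset ↔ z ∈ Set.Ioo u v :=
    fun {z} => hSfin.mem_toFinset
  have hFne : hSfin.toFinset.Nonempty := by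
    by_contra h
    rw [Finset.not_nonempty_iff_eq_empty] at h
    rw [h, Finset.sum_empty] at hsum
    omega
  have hterm01 : ∀ z ∈ hSfin.toFinset, θ (κ z) (κ v) = 0 ∨ θ (κ z) (κ v) = -1 :=
    fun z hz => hsl (κ z) (κ v) (hcons z (hmemF.mp hz))
  have hIoone : (Set.Ioo u v).Nonempty := ⟨hFne.choose, hmemF.mp hFne.choose_spec⟩
  obtain ⟨c1, hc1S, hc1cov, hc1min⟩ := myCov_min hch hIoone
  obtain ⟨v2, hv2S, hv2cov, hv2max⟩ := myCov_max hch hIoone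
  have hadj1 : AdjColor θ (κ c1) (κ v) := by
    have h := hNA u c1 hc1cov
    rw [hcol] at h
    exact myAdj_symm hθ h
  have hadj2 : AdjColor θ (κ v2) (κ v) := hNA v2 v hv2cov
  have hval1 : θ (κ c1) (κ v) = -1 := by
    rcases hterm01 c1 (hmemF.mpr hc1S) with h | h
    · exact absurd h (by unfold AdjColor at hadj1; omega)
    · exact h
  have hval2 : θ (κ v2) (κ v) = -1 := by
    rcases hterm01 v2 (hmemF.mpr hv2S) with h | h
    · exact absurd h (by unfold AdjColor at hadj2; omega)
    · exact h
  have hne12 : c1 ≠ v2 := by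
    rintro rfl
    have hFeq : hSfin.toFinset = {c1} := by
      apply Finset.eq_singleton_iff_unique_mem.mpr
      refine ⟨hmemF.mpr hc1S, fun z hz => ?_⟩
      exact le_antisymm (hv2max z (hmemF.mp hz)) (hc1min z (hmemF.mp hz))
    rw [hFeq, Finset.sum_singleton] at hsum
    omega
  have hlt12 : c1 < v2 := lt_of_le_of_ne (hc1min v2 hv2S) hne12
  have honly : ∀ z ∈ hSfin.toFinset, z ≠ c1 → z ≠ v2 → θ (κ z) (κ v) = 0 := by
    intro z hzF hz1 hz2
    by_contra h0
    have hzval : θ (κ z) (κ v) = -1 := by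
      rcases hterm01 z hzF with h | h
      · exact absurd h h0
      · exact h
    have htsub : ({c1, v2, z} : Finset P) ⊆ hSfin.toFinset := by
      intro w hw
      simp only [Finset.mem_insert, Finset.mem_singleton] at hw
      rcases hw with rfl | rfl | rfl
      · exact hmemF.mpr hc1S
      · exact hmemF.mpr hv2S
      · exact hzF
    have h3 : ∑ w ∈ ({c1, v2, z} : Finset P), -θ (κ w) (κ v) = 3 := by
      rw [Finset.sum_insert (by simp [hne12, Ne.symm hz1]),
        Finset.sum_insert (by simp [Ne.symm hz2]), Finset.sum_singleton]
      omega
    have h4 : ∑ w ∈ ({c1, v2, z} : Finset P), -θ (κ w) (κ v)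
        ≤ ∑ w ∈ hSfin.toFinset, -θ (κ w) (κ v) := by
      refine Finset.sum_le_sum_of_subset_of_nonneg htsub ?_
      intro w hw _
      rcases hterm01 w hw with h | h <;> omega
    omega
  have hbg : κ c1 ≠ κ v := myAdj_ne hθ hadj1
  have hw : ∃ w : P, c1 < w ∧ κ w = κ c1 := by
    by_contra h
    push_neg at h
    have hmax : ∀ z : P, κ z = κ c1 → ¬ c1 < z := fun z hz hlt => h z hlt hz
    obtain ⟨m, hmS, hmcov, _⟩ := myCov_min hch (⟨v2, hlt12, hv2S.2⟩ : (Set.Ioo c1 v).Nonempty)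
    have hmU : m ∈ USet θ κ c1 := ⟨hmS.1, myAdj_symm hθ (hNA c1 m hmcov)⟩
    have hvU : v ∈ USet θ κ c1 := ⟨hc1S.2, myAdj_symm hθ hadj1⟩
    exact myUCB_two hUCB1 hmax hmU hvU (ne_of_lt hmS.2)
  obtain ⟨w, hc1w, hwb⟩ := hw
  have hwv : w < v := by
    rcases eq_or_ne w v with rfl | hne
    · exact absurd hwb.symm hbg
    · have hcomp := (hch u) (le_of_lt (hc1S.1.trans hc1w)) (le_of_lt huv) hne
      rcases hcomp with h | h
      · exact lt_of_le_of_ne h hne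
      · exact absurd hwb
          (hstar w (lt_of_le_of_ne h (Ne.symm hne)) c1 ⟨le_of_lt hc1S.1, le_of_lt hc1S.2⟩)
  have hwin : w = v2 := by
    have hwF : w ∈ hSfin.toFinset := hmemF.mpr ⟨hc1S.1.trans hc1w, hwv⟩
    by_contra hne
    have h0 := honly w hwF (ne_of_gt hc1w) hne
    rw [hwb] at h0
    omega
  have hv2b : κ v2 = κ c1 := hwin ▸ hwb
  have hcons2 : ∀ z ∈ Set.Ioo c1 v2, κ z ≠ κ v2 := by
    intro z hz hzb
    have hzF : z ∈ hSfin.toFinset :=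
      hmemF.mpr ⟨hc1S.1.trans hz.1, hz.2.trans hv2S.2⟩
    have h0 := honly z hzF (ne_of_gt hz.1) (ne_of_lt hz.2)
    rw [hzb, hv2b] at h0
    omega
  have hstar2 : ∀ w' : P, v2 < w' → ∀ z ∈ Set.Icc c1 v2, κ w' ≠ κ z := by
    intro w' hw' z hz
    have hzIoo : z ∈ Set.Ioo u v := ⟨lt_of_lt_of_le hc1S.1 hz.1, lt_of_le_of_lt hz.2 hv2S.2⟩
    rcases eq_or_ne w' v with rfl | hne
    · intro h
      exact hcons z hzIoo h.symm
    · have hcomp := (hch u)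
        (le_of_lt ((hc1S.1.trans hlt12).trans hw')) (le_of_lt huv) hne
      rcases hcomp with h | h
      · have hwF' : w' ∈ Set.Ioo u v :=
          ⟨(hc1S.1.trans hlt12).trans hw', lt_of_le_of_ne h hne⟩
        exact absurd (hv2max w' hwF') hw'.not_ge
      · exact hstar w' (lt_of_le_of_ne h (Ne.symm hne)) z
          ⟨le_of_lt hzIoo.1, le_of_lt hzIoo.2⟩
  have hss : Set.Icc c1 v2 ⊂ Set.Icc u v := by
    constructor
    · intro z hz
      exact ⟨le_of_lt (lt_of_lt_of_le hc1S.1 hz.1), le_of_lt (lt_of_le_of_lt hz.2 hv2S.2)⟩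
    · intro hsub
      have h := hsub (Set.left_mem_Icc.mpr (le_of_lt huv))
      exact absurd h.1 hc1S.1.not_ge
  have hltcard : (Set.Icc c1 v2).ncard < (Set.Icc u v).ncard :=
    Set.ncard_lt_ncard hss (Set.toFinite _)
  exact ih (Set.Icc c1 v2).ncard (lt_of_lt_of_le hltcard hcard) c1 v2 le_rfl hlt12
    hv2b.symm hcons2 hstar2

lemma myInj {θ : Γ → Γ → ℤ} {κ : P → Γ}
    (hθ : DynkinDatum θ) (hsl : SimplyLaced θ) (hdc : GColoredDComplete θ κ)
    (hch : ∀ p : P, IsChain (· ≤ ·) (Set.Ici p)) : Function.Injective κ := by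
  classical
  have hnp : ¬ ∃ p q : P, p < q ∧ κ p = κ q := by
    rintro ⟨p, q, hpq, hc⟩
    have hTfin : {t : P | ∃ s, s < t ∧ κ s = κ t}.Finite := Set.toFinite _
    obtain ⟨V, hVT, hVmax⟩ : ∃ m ∈ hTfin.toFinset, ∀ x ∈ hTfin.toFinset, ¬ m < x := by
      obtain ⟨m, hm⟩ := Finset.exists_maximal (s := hTfin.toFinset)
        ⟨q, hTfin.mem_toFinset.mpr ⟨p, hpq, hc⟩⟩
      exact ⟨m, hm.1, fun x hx hlt => hlt.not_ge (hm.2 hx hlt.le)⟩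
    obtain ⟨u0, hu0V, hu0c⟩ := hTfin.mem_toFinset.mp hVT
    have hUfin : {s : P | s < V ∧ κ s = κ V}.Finite := Set.toFinite _
    obtain ⟨u, huT, humax⟩ : ∃ m ∈ hUfin.toFinset, ∀ x ∈ hUfin.toFinset, ¬ m < x := by
      obtain ⟨m, hm⟩ := Finset.exists_maximal (s := hUfin.toFinset)
        ⟨u0, hUfin.mem_toFinset.mpr ⟨hu0V, hu0c⟩⟩
      exact ⟨m, hm.1, fun x hx hlt => hlt.not_ge (hm.2 hx hlt.le)⟩
    obtain ⟨huV, huc⟩ := hUfin.mem_toFinset.mp huT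
    refine myNoPair hθ hsl hdc hch (Set.Icc u V).ncard u V le_rfl huV huc ?_ ?_
    · intro z hz hzc
      exact humax z (hUfin.mem_toFinset.mpr ⟨hz.2, hzc⟩) hz.1
    · intro w hVw z hz hc'
      exact hVmax w
        (hTfin.mem_toFinset.mpr ⟨z, lt_of_le_of_lt hz.2 hVw, hc'.symm⟩) hVw
  intro a b hab
  by_contra hne
  rcases hdc.2.2.1 a b hab with h | h
  · exact hnp ⟨a, b, lt_of_le_of_ne h hne, hab⟩
  · exact hnp ⟨b, a, lt_of_le_of_ne h (Ne.symm hne), hab.symm⟩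

lemma myAdjCov {θ : Γ → Γ → ℤ} {κ : P → Γ} (hθ : DynkinDatum θ)
    (hdc : GColoredDComplete θ κ)
    (hch : ∀ p : P, IsChain (· ≤ ·) (Set.Ici p))
    (hinj : Function.Injective κ) (x y : P) :
    AdjColor θ (κ x) (κ y) ↔ (x ⋖ y ∨ y ⋖ x) := by
  obtain ⟨hlf, hsurj, hEC, hNA, hAC, hICE2, hUCB1⟩ := hdc
  have key : ∀ p q : P, p < q → AdjColor θ (κ p) (κ q) → p ⋖ q := by
    intro p q hpq hadj
    refine ⟨hpq, fun z hz1 hz2 => ?_⟩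
    obtain ⟨m, hmS, hmcov, _⟩ := myCov_min hch (⟨z, hz1, hz2⟩ : (Set.Ioo p q).Nonempty)
    have hmax : ∀ w : P, κ w = κ p → ¬ p < w := by
      intro w hw
      rw [hinj hw]
      exact lt_irrefl p
    exact myUCB_two hUCB1 hmax
      ⟨hmS.1, myAdj_symm hθ (hNA p m hmcov)⟩
      ⟨hpq, myAdj_symm hθ hadj⟩ (ne_of_lt hmS.2)
  constructor
  · intro h
    have hne : x ≠ y := fun he => myAdj_ne hθ h (congrArg κ he)
    rcases hAC x y h with hle | hle
    · exact Or.inl (key x y (lt_of_le_of_ne hle hne) h)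
    · exact Or.inr (key y x (lt_of_le_of_ne hle (Ne.symm hne)) (myAdj_symm hθ h))
  · rintro (h | h)
    · exact hNA x y h
    · exact myAdj_symm hθ (hNA y x h)

end MyAux

/-- A finite poset all of whose principal filters are chains carries at
most one simply laced Γ-colored d-complete structure, up to isomorphism of Dynkin
diagrams compatible with the colorings. -/
theorem dComplete_structure_unique {Δ : Type w} [Fintype Γ] [Fintype Δ]
    [PartialOrder P] [Fintype P] [Nonempty P]
    (hch : ∀ x : P, IsChain (· ≤ ·) (Set.Ici x))
    (θ : Γ → Γ → ℤ) (κ : P → Γ) (θ' : Δ → Δ → ℤ) (κ' : P → Δ)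
    (hθ : DynkinDatum θ) (hθ' : DynkinDatum θ')
    (hsl : SimplyLaced θ) (hsl' : SimplyLaced θ')
    (hdc : GColoredDComplete θ κ) (hdc' : GColoredDComplete θ' κ') :
    ∃ γ : Γ → Δ, Function.Bijective γ ∧
      (∀ a b : Γ, AdjColor θ a b ↔ AdjColor θ' (γ a) (γ b)) ∧ κ' = γ ∘ κ := by
  classical
  have hinj : Function.Injective κ := myInj hθ hsl hdc hch
  have hinj' : Function.Injective κ' := myInj hθ' hsl' hdc' hch
  have hbij : Function.Bijective κ := ⟨hinj, hdc.2.1⟩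
  let e := Equiv.ofBijective κ hbij
  refine ⟨κ' ∘ e.symm, ?_, ?_, ?_⟩
  · exact Function.Bijective.comp ⟨hinj', hdc'.2.1⟩ e.symm.bijective
  · intro a b
    have hx : κ (e.symm a) = a := e.apply_symm_apply a
    have hy : κ (e.symm b) = b := e.apply_symm_apply b
    have h1 := myAdjCov hθ hdc hch hinj (e.symm a) (e.symm b)
    have h2 := myAdjCov hθ' hdc' hch hinj' (e.symm a) (e.symm b)
    rw [hx, hy] at h1
    exact h1.trans h2.symm
  · funext x
    have hx : e.symm (κ x) = x := by
      apply e.injective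
      rw [Equiv.apply_symm_apply]
      rfl
    show κ' x = κ' (e.symm (κ x))
    rw [hx]
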